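/- For any B in 𝒞 (symmetric PSD p×p, nonnegative entries, row sums 1, trace K) and B* the normalized partnership matrix of a partition G, the matrix (I − B*)B(I − B*) is PSD and its nuclear norm satisfies ‖(I−B*)B(I−B*)‖_* = ⟨I − B*, B⟩ = tr(B) − K + Σ_{k≠j} Σ_{a∈G_k, b∈G_j} B_{ab}/|G_k| ≤ tr(B) − K + (1/m) Σ_{k≠j}|B_{G_jG_k}|_1. -/
import Mathlib


open Finset Matrix

/-- The normalized partnership matrix of the partition given by assignment `g`. -/
noncomputable def Bstar (p K : ℕ) (g : Fin p → Fin K) : Matrix (Fin p) (Fin p) ℝ :=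
  fun a b => if g a = g b then ((Finset.univ.filter (fun c => g c = g a)).card : ℝ)⁻¹ else 0

/-- The convex set 𝒞. -/
def memC (p K : ℕ) (B : Matrix (Fin p) (Fin p) ℝ) : Prop :=
  B.PosSemidef ∧ (∀ a b, 0 ≤ B a b) ∧ (∀ a, ∑ b, B a b = 1) ∧ B.trace = (K : ℝ)

lemma Bstar_symm (p K : ℕ) (g : Fin p → Fin K) : (Bstar p K g)ᵀ = Bstar p K g := by
  ext a b
  simp only [Matrix.transpose_apply, Bstar]
  by_cases h : g a = g b
  · rw [if_pos h.symm, if_pos h]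
    congr 3
    apply Finset.filter_congr; intro x _; rw [h]
  · rw [if_neg (fun h' => h h'.symm), if_neg h]

lemma fiber_card_pos (p K : ℕ) (g : Fin p → Fin K) (a : Fin p) :
    0 < (Finset.univ.filter (fun c => g c = g a)).card :=
  Finset.card_pos.mpr ⟨a, by simp⟩

lemma Bstar_idem (p K : ℕ) (g : Fin p → Fin K) :
    Bstar p K g * Bstar p K g = Bstar p K g := by
  ext a b
  simp only [Matrix.mul_apply, Bstar]
  by_cases h : g a = g b
  · rw [if_pos h]
    have step : ∀ c : Fin p, (if g a = g c then ((Finset.univ.filter (fun x => g x = g a)).card : ℝ)⁻¹ else 0) *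
        (if g c = g b then ((Finset.univ.filter (fun x => g x = g c)).card : ℝ)⁻¹ else 0)
        = if g c = g a then ((Finset.univ.filter (fun x => g x = g a)).card : ℝ)⁻¹ *
          ((Finset.univ.filter (fun x => g x = g a)).card : ℝ)⁻¹ else 0 := by
      intro c
      by_cases hc : g c = g a
      · have hfc : (Finset.univ.filter (fun x => g x = g c)) = (Finset.univ.filter (fun x => g x = g a)) := by
          apply Finset.filter_congr; intro x _; rw [hc]
        rw [if_pos hc.symm, if_pos (hc.trans h), if_pos hc, hfc]
      · rw [if_neg (fun h' => hc h'.symm), zero_mul, if_neg hc]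
    rw [Finset.sum_congr rfl (fun c _ => step c), ← Finset.sum_filter, Finset.sum_const,
      nsmul_eq_mul]
    have hpos : (0:ℝ) < ((Finset.univ.filter (fun x => g x = g a)).card : ℝ) := by
      exact_mod_cast fiber_card_pos p K g a
    field_simp
  · rw [if_neg h]
    apply Finset.sum_eq_zero
    intro c _
    by_cases hc : g a = g c
    · rw [if_neg (fun h' : g c = g b => h (hc.trans h')), mul_zero]
    · rw [if_neg hc, zero_mul]

/-- for B ∈ 𝒞, the matrix (I−B*)B(I−B*) is PSD and its nuclear norm
(= its trace, being PSD) equals ⟨I−B*,B⟩ = tr(B) − K + Σ_{k≠j}Σ_{a∈G_k,b∈G_j} B_ab/|G_k|,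
which is at most tr(B) − K + (1/m)Σ_{k≠j}|B_{G_jG_k}|₁. -/
theorem stmt_8 (p K : ℕ) (g : Fin p → Fin K) (hg : Function.Surjective g)
    (m : ℕ)
    (hm : IsLeast {n : ℕ | ∃ j, n = (Finset.univ.filter (fun a => g a = j)).card} m)
    (B : Matrix (Fin p) (Fin p) ℝ) (hB : memC p K B) :
    ((1 - Bstar p K g) * B * (1 - Bstar p K g)).PosSemidef ∧
    ((1 - Bstar p K g) * B * (1 - Bstar p K g)).trace
      = ∑ a, ∑ b, (1 - Bstar p K g) a b * B a b ∧
    (∑ a, ∑ b, (1 - Bstar p K g) a b * B a b)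
      = B.trace - (K : ℝ) + ∑ a, ∑ b,
          (if g a ≠ g b then
            B a b / ((Finset.univ.filter (fun c => g c = g a)).card : ℝ) else 0) ∧
    (∑ a, ∑ b, (1 - Bstar p K g) a b * B a b)
      ≤ B.trace - (K : ℝ)
          + (1 / (m : ℝ)) * ∑ a, ∑ b, if g a ≠ g b then |B a b| else 0 := by
  obtain ⟨hPSD, hnn, hrow, htr⟩ := hB
  set P := Bstar p K g with hP
  have hPsym : Pᵀ = P := Bstar_symm p K g
  have hQsym : (1 - P)ᵀ = 1 - P := by
    rw [Matrix.transpose_sub, Matrix.transpose_one, hPsym]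
  have hQidem : (1 - P) * (1 - P) = 1 - P := by
    have hPP : P * P = P := Bstar_idem p K g
    rw [sub_mul, one_mul, mul_sub, mul_one, hPP]
    abel
  -- PSD part
  have h1 : ((1 - P) * B * (1 - P)).PosSemidef := by
    have := hPSD.mul_mul_conjTranspose_same (1 - P)
    rwa [Matrix.conjTranspose_eq_transpose_of_trivial, hQsym] at this
  -- trace equality
  have hBsym := hPSD.isHermitian
  rw [Matrix.IsHermitian, Matrix.conjTranspose_eq_transpose_of_trivial] at hBsym
  have hs : ∀ a b, B b a = B a b := fun a b => congrFun (congrFun hBsym a) b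
  have h2 : ((1 - P) * B * (1 - P)).trace = ∑ a, ∑ b, (1 - P) a b * B a b := by
    rw [Matrix.trace_mul_cycle, hQidem, Matrix.trace]
    simp only [Matrix.diag_apply, Matrix.mul_apply]
    exact Finset.sum_congr rfl fun a _ => Finset.sum_congr rfl fun b _ => by rw [hs]
  -- main sum computation
  have hKsum : ∑ a : Fin p, ((Finset.univ.filter (fun c => g c = g a)).card : ℝ)⁻¹ = K := by
    rw [← Finset.sum_fiberwise Finset.univ g
      (fun a => ((Finset.univ.filter (fun c => g c = g a)).card : ℝ)⁻¹)]
    have : ∀ j : Fin K, ∑ a ∈ Finset.univ.filter (fun a => g a = j),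
        ((Finset.univ.filter (fun c => g c = g a)).card : ℝ)⁻¹ = 1 := by
      intro j
      obtain ⟨a0, ha0⟩ := hg j
      have hcard : ∀ a ∈ Finset.univ.filter (fun a => g a = j),
          ((Finset.univ.filter (fun c => g c = g a)).card : ℝ)⁻¹
            = ((Finset.univ.filter (fun c => g c = j)).card : ℝ)⁻¹ := by
        intro a ha
        rw [Finset.mem_filter] at ha
        simp [ha.2]
      rw [Finset.sum_congr rfl hcard, Finset.sum_const, nsmul_eq_mul]
      have hpos : 0 < (Finset.univ.filter (fun c => g c = j)).card :=
        Finset.card_pos.mpr ⟨a0, by simp [ha0]⟩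
      field_simp
    rw [Finset.sum_congr rfl fun j _ => this j]
    simp
  have h3 : (∑ a, ∑ b, (1 - P) a b * B a b)
      = B.trace - (K : ℝ) + ∑ a, ∑ b,
          (if g a ≠ g b then
            B a b / ((Finset.univ.filter (fun c => g c = g a)).card : ℝ) else 0) := by
    have expand : ∀ a b : Fin p, (1 - P) a b * B a b
        = (if a = b then B a b else 0)
          - (B a b / ((Finset.univ.filter (fun c => g c = g a)).card : ℝ)
            - if g a ≠ g b then B a b / ((Finset.univ.filter (fun c => g c = g a)).card : ℝ) else 0) := by
      intro a b
      simp only [Matrix.sub_apply, Matrix.one_apply, hP, Bstar]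
      by_cases hab : a = b
      · subst hab; simp [div_eq_mul_inv]; ring
      · by_cases h : g a = g b
        · simp [hab, h, div_eq_mul_inv]; ring
        · simp [hab, h]
    simp only [expand, Finset.sum_sub_distrib]
    have t1 : ∑ a : Fin p, ∑ b : Fin p, (if a = b then B a b else 0) = B.trace := by
      simp [Matrix.trace, Matrix.diag_apply, Finset.sum_ite_eq, Finset.mem_univ]
    have t2 : ∑ a : Fin p, ∑ b : Fin p,
        B a b / ((Finset.univ.filter (fun c => g c = g a)).card : ℝ) = K := by
      have : ∀ a : Fin p, ∑ b, B a b / ((Finset.univ.filter (fun c => g c = g a)).card : ℝ)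
          = ((Finset.univ.filter (fun c => g c = g a)).card : ℝ)⁻¹ := by
        intro a
        rw [← Finset.sum_div, hrow a, one_div]
      rw [Finset.sum_congr rfl fun a _ => this a, hKsum]
    rw [t1, t2]
    ring
  refine ⟨h1, h2, h3, ?_⟩
  rw [h3]
  have hm0 : 0 < m := by
    obtain ⟨j, hj⟩ := hm.1
    obtain ⟨a0, ha0⟩ := hg j
    rw [hj]
    exact Finset.card_pos.mpr ⟨a0, by simp [ha0]⟩
  have key : ∀ a b : Fin p,
      (if g a ≠ g b then B a b / ((Finset.univ.filter (fun c => g c = g a)).card : ℝ) else 0)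
        ≤ (1 / (m : ℝ)) * (if g a ≠ g b then |B a b| else 0) := by
    intro a b
    by_cases h : g a ≠ g b
    · rw [if_pos h, if_pos h, abs_of_nonneg (hnn a b), one_div, mul_comm, ← div_eq_mul_inv]
      apply div_le_div_of_nonneg_left (hnn a b) (by exact_mod_cast hm0)
      exact_mod_cast hm.2 ⟨g a, rfl⟩
    · simp [h]
  calc B.trace - (K : ℝ) + ∑ a, ∑ b,
        (if g a ≠ g b then B a b / ((Finset.univ.filter (fun c => g c = g a)).card : ℝ) else 0)
      ≤ B.trace - (K : ℝ) + ∑ a, ∑ b, (1 / (m : ℝ)) * (if g a ≠ g b then |B a b| else 0) := by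
        gcongr with a _ b _
        exact key a b
    _ = B.trace - (K : ℝ) + (1 / (m : ℝ)) * ∑ a, ∑ b, (if g a ≠ g b then |B a b| else 0) := by
        rw [Finset.mul_sum]
        congr 1
        exact Finset.sum_congr rfl fun a _ => (Finset.mul_sum _ _ _).symm
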